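/- Let G be a finite group and G_0 ≤ G a subgroup with D(G_0) = D(G). If D(G_0) = 1 + d(G_0), then G_0 = G. -/

import Mathlib

namespace ProductOne

open scoped Classical

variable {G : Type*} [Group G]

/-- `S` is a product-one sequence over `G`: its terms can be ordered with product `1`. -/
def IsProductOne (S : Multiset G) : Prop :=
  ∃ l : List G, (l : Multiset G) = S ∧ l.prod = 1

/-- `S` is an atom (a minimal product-one sequence): it is a nontrivial product-one
sequence that is not the concatenation of two nontrivial product-one sequences. -/
def IsAtomSeq (S : Multiset G) : Prop :=
  S ≠ 0 ∧ IsProductOne S ∧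
    ∀ A B : Multiset G, S = A + B → IsProductOne A → IsProductOne B → A = 0 ∨ B = 0

/-- `S` is a sequence over the subset `G₀ ⊆ G`. -/
def SeqOn (G₀ : Set G) (S : Multiset G) : Prop := ∀ g ∈ S, g ∈ G₀

/-- `S` is an atom of the monoid `B(G₀)` of product-one sequences over `G₀`. -/
def IsAtomSeqOn (G₀ : Set G) (S : Multiset G) : Prop := SeqOn G₀ S ∧ IsAtomSeq S

/-- The set of lengths `L(A)` of factorizations of `A` into atoms over `G₀`. -/
def lengthsOn (G₀ : Set G) (A : Multiset G) : Set ℕ :=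
  {k | ∃ f : Multiset (Multiset G), Multiset.card f = k ∧
        (∀ U ∈ f, IsAtomSeqOn G₀ U) ∧ f.sum = A}

/-- The set of lengths `L(A)` over the whole group. -/
def lengths (A : Multiset G) : Set ℕ := lengthsOn Set.univ A

/-- The set of distances of a set `L ⊆ ℕ`. -/
def distancesOf (L : Set ℕ) : Set ℕ :=
  {d | 0 < d ∧ ∃ a, a ∈ L ∧ a + d ∈ L ∧ ∀ b ∈ L, ¬(a < b ∧ b < a + d)}

/-- The set of distances `Δ(G₀)` of the monoid `B(G₀)`. -/
def DeltaOn (G₀ : Set G) : Set ℕ :=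
  {d | ∃ A : Multiset G, SeqOn G₀ A ∧ IsProductOne A ∧ d ∈ distancesOf (lengthsOn G₀ A)}

/-- The set of distances `Δ(G)` of `B(G)`. -/
def Delta (G : Type*) [Group G] : Set ℕ := DeltaOn (Set.univ : Set G)

/-- The large Davenport constant of `G₀`: maximal length of an atom of `B(G₀)`. -/
noncomputable def DavenportOn (G₀ : Set G) : ℕ :=
  sSup {k | ∃ S : Multiset G, IsAtomSeqOn G₀ S ∧ Multiset.card S = k}

/-- The large Davenport constant `D(G)`. -/
noncomputable def Davenport (G : Type*) [Group G] : ℕ :=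
  DavenportOn (Set.univ : Set G)

/-- The small Davenport constant `d(G₀)`: maximal length of a product-one free
sequence over `G₀`. -/
noncomputable def smallDavenportOn (G₀ : Set G) : ℕ :=
  sSup {k | ∃ S : Multiset G, SeqOn G₀ S ∧ Multiset.card S = k ∧
        ∀ T : Multiset G, T ≤ S → T ≠ 0 → ¬IsProductOne T}

/-- `Δ*(G) = {min Δ(G₀) : G₀ ⊆ G with Δ(G₀) ≠ ∅}`. -/
def DeltaStar (G : Type*) [Group G] : Set ℕ :=
  {d | ∃ G₀ : Set G, (DeltaOn G₀).Nonempty ∧ d = sInf (DeltaOn G₀)}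

/-- The elasticity `ρ(L) = max L / min L` of a set of lengths (with the set of
positive elements used, and `ρ = 1` if there are none). -/
noncomputable def elasticity (L : Set ℕ) : ℚ :=
  if (L ∩ {k | 0 < k}).Nonempty then
    ((sSup (L ∩ {k | 0 < k}) : ℕ) : ℚ) / ((sInf (L ∩ {k | 0 < k}) : ℕ) : ℚ)
  else 1

/-- The elasticity `ρ(G₀)` of the monoid `B(G₀)`. -/
noncomputable def rhoOn (G₀ : Set G) : ℝ :=
  sSup {x : ℝ | ∃ A : Multiset G, SeqOn G₀ A ∧ IsProductOne A ∧
    x = (elasticity (lengthsOn G₀ A) : ℝ)}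

/-- `Δ*_ρ(G) = {min Δ(G₀) : G₀ ⊆ G with ρ(G₀) = D(G)/2}`. -/
noncomputable def DeltaRhoStar (G : Type*) [Group G] : Set ℕ :=
  {d | ∃ G₀ : Set G, rhoOn G₀ = (Davenport G : ℝ) / 2 ∧ d = sInf (DeltaOn G₀)}

/-- Divisibility in the monoid `B(G)`. -/
def BDvd (A S : Multiset G) : Prop :=
  ∃ C : Multiset G, IsProductOne C ∧ S = A + C

/-- The `ω`-invariant `ω(B(G), A)`. -/
noncomputable def omegaAt (A : Multiset G) : ℕ∞ :=
  sInf {N : ℕ∞ | ∀ f : Multiset (Multiset G),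
    (∀ B ∈ f, IsProductOne B) → BDvd A f.sum →
    ∃ t ≤ f, (Multiset.card t : ℕ∞) ≤ N ∧ BDvd A t.sum}

/-- `ω(G) = sup {ω(B(G), U) : U an atom of B(G)}`. -/
noncomputable def omegaInv (G : Type*) [Group G] : ℕ∞ :=
  ⨆ U ∈ {U : Multiset G | IsAtomSeq U}, omegaAt U

/-- `z` is a factorization of `A` into atoms. -/
def IsFactorization (A : Multiset G) (z : Multiset (Multiset G)) : Prop :=
  (∀ U ∈ z, IsAtomSeq U) ∧ z.sum = A

/-- The distance between two factorizations. -/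
noncomputable def factDist (z z' : Multiset (Multiset G)) : ℕ :=
  letI := Classical.decEq (Multiset G)
  max (Multiset.card (z - z')) (Multiset.card (z' - z))

/-- The catenary degree `c(A)`. -/
noncomputable def catenaryAt (A : Multiset G) : ℕ∞ :=
  sInf {N : ℕ∞ | ∀ z z' : Multiset (Multiset G),
    IsFactorization A z → IsFactorization A z' →
    Relation.ReflTransGen
      (fun x y => IsFactorization A y ∧ (factDist x y : ℕ∞) ≤ N) z z'}

/-- The set of positive catenary degrees `Ca(G)`. -/
noncomputable def CatenarySet (G : Type*) [Group G] : Set ℕ∞ :=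
  {c | ∃ A : Multiset G, IsProductOne A ∧ catenaryAt A = c ∧ 0 < c}

/-- The catenary degree `c(G)` of `B(G)`. -/
noncomputable def catenaryDegree (G : Type*) [Group G] : ℕ∞ :=
  ⨆ A ∈ {A : Multiset G | IsProductOne A}, catenaryAt A

/-- The cross number `k(S)` of a sequence. -/
noncomputable def crossNumber (S : Multiset G) : ℚ :=
  (S.map fun g => (1 : ℚ) / (orderOf g : ℚ)).sum

/-- The system of sets of lengths `L(G)`. -/
def LSystem (G : Type*) [Group G] : Set (Set ℕ) :=
  {L | ∃ A : Multiset G, IsProductOne A ∧ L = lengths A}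

/-- The set of products `π(S)` of all orderings of the terms of `S`. -/
def piSet (S : Multiset G) : Set G :=
  {g | ∃ l : List G, (l : Multiset G) = S ∧ l.prod = g}

/-- The sumset `{x₁, -x₁} + ⋯ + {x_s, -x_s}` for a sequence `a = x₁ ⋯ x_s`. -/
def signedSums {α : Type*} [AddCommGroup α] (a : Multiset α) : Set α :=
  {z | ∃ t ≤ a, z = t.sum + t.sum - a.sum}

/-- `Σ_k(T)`: the set of sums of `k`-term subsequences of `T`. -/
def subseqSums {α : Type*} [AddCommMonoid α] (k : ℕ) (T : Multiset α) : Set α :=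
  {z | ∃ t ≤ T, Multiset.card t = k ∧ t.sum = z}

/-- The subsequence `S_X` of all terms of `S` lying in `X`. -/
noncomputable def restrictTo (X : Set G) (S : Multiset G) : Multiset G :=
  letI := Classical.decPred fun g => g ∈ X
  S.filter fun g => g ∈ X

/-- The maximum multiplicity `h(S)` of a term of `S`. -/
noncomputable def maxMultiplicity {α : Type*} (S : Multiset α) : ℕ :=
  letI := Classical.decEq α
  S.toFinset.sup S.count

end ProductOne

section Aux

open ProductOne

variable {G : Type*} [Group G]

lemma split_aux (l : List G) (i j : ℕ) (hij : i < j) (hj : j < l.length)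
    (hk : (l.take i).prod = (l.take j).prod) :
    ∃ a b c : List G, l = a ++ b ++ c ∧ b ≠ [] ∧ c ≠ [] ∧ b.prod = 1 := by
  refine ⟨l.take i, (l.take j).drop i, l.drop j, ?_, ?_, ?_, ?_⟩
  · have h1 : l.take i ++ (l.take j).drop i = l.take j := by
      conv_lhs => rw [show l.take i = (l.take j).take i by
        rw [List.take_take, min_eq_left hij.le]]
      exact List.take_append_drop i (l.take j)
    rw [h1, List.take_append_drop]
  · have : ((l.take j).drop i).length = j - i := by
      simp [List.length_drop, List.length_take, Nat.min_eq_left hj.le]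
    intro hnil
    rw [hnil] at this
    simp at this
    omega
  · intro hnil
    have : (l.drop j).length = l.length - j := List.length_drop
    rw [hnil] at this
    simp at this
    omega
  · have h1 : l.take i ++ (l.take j).drop i = l.take j := by
      conv_lhs => rw [show l.take i = (l.take j).take i by
        rw [List.take_take, min_eq_left hij.le]]
      exact List.take_append_drop i (l.take j)
    have h2 : (l.take i).prod * ((l.take j).drop i).prod = (l.take j).prod := by
      rw [← List.prod_append, h1]
    rw [← hk] at h2
    have h3 : (l.take i).prod * ((l.take j).drop i).prod = (l.take i).prod * 1 := by
      rw [mul_one]; exact h2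
    exact mul_left_cancel h3

lemma split_of_long [Finite G] (l : List G) (h : Nat.card G < l.length) :
    ∃ a b c : List G, l = a ++ b ++ c ∧ b ≠ [] ∧ c ≠ [] ∧ b.prod = 1 := by
  have := Fintype.ofFinite G
  obtain ⟨i, j, hne, hk⟩ := Fintype.exists_ne_map_eq_of_card_lt
    (fun k : Fin l.length => (l.take (k : ℕ)).prod)
    (by simpa [Nat.card_eq_fintype_card] using h)
  rcases lt_trichotomy (i : ℕ) (j : ℕ) with hij | hij | hij
  · exact split_aux l i j hij j.isLt hk
  · exact absurd (Fin.ext hij) hne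
  · exact split_aux l j i hij i.isLt hk.symm

lemma free_card_le [Finite G] {S : Multiset G}
    (hfree : ∀ T : Multiset G, T ≤ S → T ≠ 0 → ¬IsProductOne T) :
    Multiset.card S ≤ Nat.card G := by
  by_contra hlt
  push_neg at hlt
  have hlen : Nat.card G < S.toList.length := by
    simpa [Multiset.length_toList] using hlt
  obtain ⟨a, b, c, hsplit, hb, _, hbp⟩ := split_of_long S.toList hlen
  refine hfree (↑b) ?_ (by simpa using hb) ⟨b, rfl, hbp⟩
  calc (↑b : Multiset G) ≤ (↑a + ↑b) + ↑c :=
        le_trans (Multiset.le_add_left _ _) (Multiset.le_add_right _ _)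
  _ = S := by rw [Multiset.coe_add, Multiset.coe_add, ← hsplit, Multiset.coe_toList]

lemma atom_card_le [Finite G] {S : Multiset G} (hS : IsAtomSeq S) :
    Multiset.card S ≤ Nat.card G := by
  by_contra hlt
  push_neg at hlt
  obtain ⟨hne, ⟨l, hl, hp⟩, hmin⟩ := hS
  have hlen : Nat.card G < l.length := by
    rw [← Multiset.coe_card, hl]; exact hlt
  obtain ⟨a, b, c, hsplit, hb, hc, hbp⟩ := split_of_long l hlen
  have hSeq : S = (↑(a ++ c) : Multiset G) + ↑b := by
    rw [← hl, hsplit, ← Multiset.coe_toList (↑(a ++ b ++ c) : Multiset G)]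
    rw [Multiset.coe_toList]
    rw [show ((a ++ b ++ c : List G) : Multiset G) = (↑a + ↑b) + ↑c by
      rw [Multiset.coe_add, Multiset.coe_add]]
    rw [show ((a ++ c : List G) : Multiset G) = ↑a + ↑c by rw [Multiset.coe_add]]
    exact add_right_comm (↑a : Multiset G) ↑b ↑c
  have hAp : IsProductOne (↑(a ++ c) : Multiset G) := by
    refine ⟨a ++ c, rfl, ?_⟩
    rw [hsplit] at hp
    simp only [List.prod_append, hbp, mul_one] at hp ⊢
    exact hp
  have hBp : IsProductOne (↑b : Multiset G) := ⟨b, rfl, hbp⟩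
  rcases hmin _ _ hSeq hAp hBp with h0 | h0
  · simp only [Multiset.coe_eq_zero, List.append_eq_nil_iff] at h0
    exact hc h0.2
  · exact hb (by simpa using h0)

lemma not_prodOne_single_outside (G₀ : Subgroup G) {g : G} (hg : g ∉ G₀)
    {T : Multiset G} (hT : SeqOn (G₀ : Set G) T) : ¬IsProductOne (g ::ₘ T) := by
  rintro ⟨l, hl, hp⟩
  have hgmem : g ∈ l := by
    rw [← Multiset.mem_coe, hl]; exact Multiset.mem_cons_self _ _
  obtain ⟨a, c, rfl⟩ := List.append_of_mem hgmem
  have hac : (↑a + ↑c : Multiset G) = T := by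
    have h2 : (g ::ₘ (↑a + ↑c : Multiset G)) = g ::ₘ T := by
      rw [← hl, ← Multiset.add_cons, Multiset.cons_coe, Multiset.coe_add]
    exact (Multiset.cons_inj_right g).mp h2
  have ha : ∀ x ∈ a, x ∈ G₀ := fun x hx => hT x (by
    rw [← hac]; exact Multiset.mem_add.mpr (Or.inl (by simpa using hx)))
  have hcm : ∀ x ∈ c, x ∈ G₀ := fun x hx => hT x (by
    rw [← hac]; exact Multiset.mem_add.mpr (Or.inr (by simpa using hx)))
  have hap : a.prod ∈ G₀ := list_prod_mem ha
  have hcp : c.prod ∈ G₀ := list_prod_mem hcm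
  have h1 : a.prod * (g * c.prod) = 1 := by
    simpa [List.prod_append, mul_assoc] using hp
  have h2 : g * c.prod = a.prod⁻¹ := (inv_eq_of_mul_eq_one_right h1).symm
  have h3 : g = a.prod⁻¹ * c.prod⁻¹ := by
    rw [← h2]; group
  exact hg (h3 ▸ mul_mem (inv_mem hap) (inv_mem hcp))

lemma exists_atom_of_free {S : Multiset G}
    (hfree : ∀ T : Multiset G, T ≤ S → T ≠ 0 → ¬IsProductOne T) :
    ∃ U : Multiset G, IsAtomSeq U ∧ Multiset.card U = Multiset.card S + 1 := by
  classical
  set u := S.toList.prod⁻¹ with hu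
  refine ⟨u ::ₘ S, ⟨by simp, ⟨S.toList ++ [u], ?_, ?_⟩, ?_⟩, by simp⟩
  · rw [← Multiset.coe_add, Multiset.coe_toList]
    rw [show ((([u] : List G)) : Multiset G) = {u} from rfl]
    rw [add_comm, Multiset.singleton_add]
  · simp [hu]
  · intro A B hAB hA hB
    by_contra hcon
    push_neg at hcon
    obtain ⟨hA0, hB0⟩ := hcon
    have key : ∀ C D : Multiset G, u ::ₘ S = C + D →
        Multiset.count u C ≤ Multiset.count u S → C ≤ S := by
      intro C D hCD hcu
      rw [Multiset.le_iff_count]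
      intro x
      by_cases hx : x = u
      · subst hx; exact hcu
      · have hcnt := congrArg (Multiset.count x) hCD
        simp only [Multiset.count_cons_of_ne hx, Multiset.count_add] at hcnt
        omega
    have h1 : Multiset.count u S + 1 = Multiset.count u A + Multiset.count u B := by
      have := congrArg (Multiset.count u) hAB
      simpa [Multiset.count_cons_self] using this
    by_cases hca : Multiset.count u A ≤ Multiset.count u S
    · exact hfree A (key A B hAB hca) hA0 hA
    · by_cases hcb : Multiset.count u B ≤ Multiset.count u S
      · exact hfree B (key B A (by rwa [add_comm] at hAB) hcb) hB0 hB
      · omega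

end Aux

open ProductOne in
/-- Let `G` be a finite group and `G₀ ≤ G` a subgroup with
`D(G₀) = D(G)`. If `D(G₀) = 1 + d(G₀)`, then `G₀ = G`. -/
theorem subgroup_eq_top_of_davenport (G : Type*) [Group G] [Finite G] (G₀ : Subgroup G)
    (hD : DavenportOn (G₀ : Set G) = Davenport G)
    (h : DavenportOn (G₀ : Set G) = 1 + smallDavenportOn (G₀ : Set G)) :
    G₀ = ⊤ := by
  classical
  by_contra hne
  obtain ⟨g, hg⟩ : ∃ g, g ∉ G₀ := by
    by_contra h'
    push_neg at h'
    exact hne ((Subgroup.eq_top_iff' G₀).mpr h')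
  -- the small Davenport constant is attained
  set dset := {k | ∃ S : Multiset G, SeqOn (G₀ : Set G) S ∧ Multiset.card S = k ∧
      ∀ T : Multiset G, T ≤ S → T ≠ 0 → ¬IsProductOne T} with hdset
  have hdne : dset.Nonempty :=
    ⟨0, 0, fun x hx => absurd hx (Multiset.notMem_zero x), rfl,
      fun T hT h0 _ => h0 (Multiset.le_zero.mp hT)⟩
  have hdbdd : BddAbove dset := by
    refine ⟨Nat.card G, fun k hk => ?_⟩
    obtain ⟨S, _, hcard, hfree⟩ := hk
    exact hcard ▸ free_card_le hfree
  have hdmem : sSup dset ∈ dset := Nat.sSup_mem hdne hdbdd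
  obtain ⟨S, hSG, hScard, hSfree⟩ := hdmem
  have hgS : Multiset.count g S = 0 := by
    rw [Multiset.count_eq_zero]
    exact fun hmem => hg (hSG g hmem)
  -- g ::ₘ S is product-one free
  have hS'free : ∀ T : Multiset G, T ≤ g ::ₘ S → T ≠ 0 → ¬IsProductOne T := by
    intro T hT h0 hT1
    by_cases hgT : g ∈ T
    · have herase : T.erase g ≤ S := by
        have := Multiset.erase_le_erase g hT
        rwa [Multiset.erase_cons_head] at this
      have hTeq : g ::ₘ T.erase g = T := Multiset.cons_erase hgT
      have hseq : SeqOn (G₀ : Set G) (T.erase g) := fun x hx =>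
        hSG x (Multiset.mem_of_le herase hx)
      exact not_prodOne_single_outside G₀ hg hseq (hTeq.symm ▸ hT1)
    · have hTS : T ≤ S := by
        rw [Multiset.le_iff_count]
        intro x
        by_cases hx : x = g
        · subst hx
          simp [Multiset.count_eq_zero.mpr hgT]
        · have := Multiset.le_iff_count.mp hT x
          rwa [Multiset.count_cons_of_ne hx] at this
      exact hSfree T hTS h0 hT1
  obtain ⟨U, hU, hUcard⟩ := exists_atom_of_free hS'free
  have hUcard2 : Multiset.card U = sSup dset + 2 := by
    rw [hUcard, Multiset.card_cons, hScard]
  -- U gives a lower bound on D(G)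
  set Dset := {k | ∃ S : Multiset G, IsAtomSeqOn (Set.univ : Set G) S ∧
      Multiset.card S = k} with hDset
  have hDbdd : BddAbove Dset := by
    refine ⟨Nat.card G, fun k hk => ?_⟩
    obtain ⟨S, ⟨_, hS⟩, hcard⟩ := hk
    exact hcard ▸ atom_card_le hS
  have hUD : Multiset.card U ∈ Dset := ⟨U, ⟨fun x _ => Set.mem_univ x, hU⟩, rfl⟩
  have hle : sSup dset + 2 ≤ Davenport G := by
    rw [← hUcard2]
    exact le_csSup hDbdd hUD
  have hsmall : smallDavenportOn (G₀ : Set G) = sSup dset := rfl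
  rw [hD, hsmall] at h
  omega
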